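/- cos(π/9) is irrational. -/

import Mathlib

theorem cos_pi_div_nine_irrational : Irrational (Real.cos (Real.pi / 9)) := by
  rintro ⟨q, hq⟩
  -- cos(3·(π/9)) = cos(π/3) = 1/2, and cos(3x) = 4cos³x − 3cosx
  have h3 : Real.cos (3 * (Real.pi / 9)) = 4 * Real.cos (Real.pi / 9) ^ 3
      - 3 * Real.cos (Real.pi / 9) := Real.cos_three_mul _
  have heq : (3 : ℝ) * (Real.pi / 9) = Real.pi / 3 := by ring
  rw [heq, Real.cos_pi_div_three] at h3
  rw [← hq] at h3
  have hq0 : 8 * q ^ 3 - 6 * q - 1 = 0 := by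
    have : ((8 * q ^ 3 - 6 * q - 1 : ℚ) : ℝ) = 0 := by push_cast; linarith
    exact_mod_cast this
  set n := q.num with hn
  set d := (q.den : ℤ) with hd
  have hd0 : 0 < d := by positivity
  have hqnd : (q : ℚ) = (n : ℚ) / (d : ℚ) := by
    rw [hn, hd]; exact_mod_cast (Rat.num_div_den q).symm
  have hdQ : (d : ℚ) ≠ 0 := by positivity
  have key : 8 * n ^ 3 - 6 * n * d ^ 2 - d ^ 3 = 0 := by
    have : (8 * (n : ℚ) ^ 3 - 6 * n * d ^ 2 - d ^ 3) = 0 := by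
      rw [hqnd] at hq0
      field_simp at hq0
      have h2 : (d : ℚ) * (8 * (n : ℚ) ^ 3 - 6 * n * d ^ 2 - d ^ 3) = 0 := by
        linear_combination (d : ℚ) * hq0
      exact (mul_eq_zero.mp h2).resolve_left hdQ
    exact_mod_cast this
  have hcop : IsCoprime n d := by
    rw [Int.isCoprime_iff_gcd_eq_one]
    exact q.reduced
  have hn_dvd : n ∣ d ^ 3 := by
    have : d ^ 3 = n * (8 * n ^ 2 - 6 * d ^ 2) := by linarith [key]; 
    exact ⟨_, this⟩
  have hn_unit : IsUnit n := (hcop.pow_right (n := 3)).isUnit_of_dvd' dvd_rfl hn_dvd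
  have hd_dvd : d ∣ 8 := by
    have h8 : d ∣ 8 * n ^ 3 := ⟨6 * n * d + d ^ 2, by linarith [key]⟩
    exact (hcop.symm.pow_right (n := 3)).dvd_of_dvd_mul_right h8
  have hd_le : d ≤ 8 := Int.le_of_dvd (by norm_num) hd_dvd
  have hn1 : n = 1 ∨ n = -1 := Int.isUnit_iff.mp hn_unit
  interval_cases d <;> rcases hn1 with h | h <;> rw [h] at key <;> norm_num at key
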